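/- If the state variables of a BCN can be partitioned into m disjoint observed paths O^1,...,O^m, where O^i = (X_{i_1},...,X_{i_{N_i}}) with X_{i_{N_i}} directly measurable and each X_{i_{t+1}}(k+1) = g^i_t(X_{i_t}(k)) for an identity-or-negation function g^i_t, then the BCN is observable on [0, max_i N_i − 1]; in particular, every state variable's initial value is a function of the output sequence on that interval, independent of the input sequence. -/

import Mathlib

/-- Trajectory of a Boolean control network X(k+1) = f(X(k), U(k)). -/
def traj {n p : ℕ} (f : (Fin n → Bool) → (Fin p → Bool) → (Fin n → Bool))
    (U : ℕ → (Fin p → Bool)) (x0 : Fin n → Bool) : ℕ → (Fin n → Bool)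
  | 0 => x0
  | k + 1 => f (traj f U x0 k) (U k)

/-- Composition of the chain maps `g (t+k-1) ∘ ... ∘ g t`. -/
def chainComp (g : ℕ → Bool → Bool) (t : ℕ) : ℕ → Bool → Bool
  | 0 => id
  | k + 1 => g (t + k) ∘ chainComp g t k

lemma chainComp_id_or_not (g : ℕ → Bool → Bool) (t k : ℕ)
    (h : ∀ s < k, g (t + s) = id ∨ g (t + s) = not) :
    chainComp g t k = id ∨ chainComp g t k = not := by
  induction k with
  | zero => left; rfl
  | succ k ih =>
    have hk := h k (by omega)
    have ih' := ih (fun s hs => h s (by omega))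
    rcases hk with h1 | h1 <;> rcases ih' with h2 | h2 <;>
      [left; right; right; left] <;> funext b <;> simp [chainComp, h1, h2]

lemma chainComp_invol (g : ℕ → Bool → Bool) (t k : ℕ)
    (h : ∀ s < k, g (t + s) = id ∨ g (t + s) = not) (b : Bool) :
    chainComp g t k (chainComp g t k b) = b := by
  rcases chainComp_id_or_not g t k h with h' | h' <;> simp [h']

lemma traj_chain {n p m : ℕ}
    (f : (Fin n → Bool) → (Fin p → Bool) → (Fin n → Bool))
    (len : Fin m → ℕ)
    (idx : (i : Fin m) → Fin (len i) → Fin n)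
    (g : Fin m → ℕ → Bool → Bool)
    (hchain : ∀ (i : Fin m) (t : ℕ) (ht : t + 1 < len i),
      (g i t = id ∨ g i t = not) ∧
      ∀ x u, f x u (idx i ⟨t + 1, ht⟩) = g i t (x (idx i ⟨t, Nat.lt_of_succ_lt ht⟩)))
    (U : ℕ → Fin p → Bool) (x0 : Fin n → Bool) (i : Fin m) :
    ∀ (k t : ℕ) (h : t + k < len i),
      traj f U x0 k (idx i ⟨t + k, h⟩) =
        chainComp (g i) t k (x0 (idx i ⟨t, by omega⟩)) := by
  intro k
  induction k with
  | zero => intro t h; rfl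
  | succ k ih =>
    intro t h
    have ht : (t + k) + 1 < len i := by omega
    have step := (hchain i (t + k) ht).2 (traj f U x0 k) (U k)
    have : traj f U x0 (k + 1) (idx i ⟨t + k + 1, ht⟩) =
        g i (t + k) (traj f U x0 k (idx i ⟨t + k, by omega⟩)) := step
    rw [show (⟨t + (k+1), h⟩ : Fin (len i)) = ⟨t + k + 1, ht⟩ from rfl, this,
      ih t (by omega)]
    rfl

theorem disjoint_observed_paths_observable (n p m : ℕ) (hm : 0 < m)
    (f : (Fin n → Bool) → (Fin p → Bool) → (Fin n → Bool))
    (len : Fin m → ℕ) (hlen : ∀ i, 0 < len i)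
    (idx : (i : Fin m) → Fin (len i) → Fin n)
    (hpart : Function.Bijective (fun q : Σ i : Fin m, Fin (len i) => idx q.1 q.2))
    (g : Fin m → ℕ → Bool → Bool)
    (hchain : ∀ (i : Fin m) (t : ℕ) (ht : t + 1 < len i),
      (g i t = id ∨ g i t = not) ∧
      ∀ x u, f x u (idx i ⟨t + 1, ht⟩) = g i t (x (idx i ⟨t, by omega⟩))) :
    (∀ (U : ℕ → Fin p → Bool) (x0 x0' : Fin n → Bool), x0 ≠ x0' →
      ∃ k ≤ Finset.univ.sup len - 1, ∃ i : Fin m,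
        traj f U x0 k (idx i ⟨len i - 1, by have := hlen i; omega⟩) ≠
        traj f U x0' k (idx i ⟨len i - 1, by have := hlen i; omega⟩)) ∧
    (∃ F : (Fin m → ℕ → Bool) → (Fin n → Bool),
      ∀ (U : ℕ → Fin p → Bool) (x0 : Fin n → Bool),
        F (fun i k => if k ≤ Finset.univ.sup len - 1 then
            traj f U x0 k (idx i ⟨len i - 1, by have := hlen i; omega⟩) else false) = x0) := by
  classical
  set e := Equiv.ofBijective _ hpart with he
  -- the recovery function
  set F : (Fin m → ℕ → Bool) → (Fin n → Bool) := fun Y j =>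
    let q := e.symm j
    chainComp (g q.1) q.2 (len q.1 - 1 - q.2) (Y q.1 (len q.1 - 1 - q.2)) with hF
  have hFmain : ∀ (U : ℕ → Fin p → Bool) (x0 : Fin n → Bool),
      F (fun i k => if k ≤ Finset.univ.sup len - 1 then
          traj f U x0 k (idx i ⟨len i - 1, by have := hlen i; omega⟩) else false) = x0 := by
    intro U x0
    have key : ∀ q : Σ i : Fin m, Fin (len i),
        chainComp (g q.1) q.2 (len q.1 - 1 - q.2)
          ((fun i k => if k ≤ Finset.univ.sup len - 1 then
            traj f U x0 k (idx i ⟨len i - 1, by have := hlen i; omega⟩) else false)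
            q.1 (len q.1 - 1 - q.2)) = x0 (idx q.1 q.2) := by
      rintro ⟨i, t⟩
      have ht : (t : ℕ) < len i := t.isLt
      set k := len i - 1 - (t : ℕ) with hk
      have hsup : len i ≤ Finset.univ.sup len := Finset.le_sup (Finset.mem_univ i)
      have hkle : k ≤ Finset.univ.sup len - 1 := by omega
      have hgs : ∀ s < k, g i ((t : ℕ) + s) = id ∨ g i ((t : ℕ) + s) = not := by
        intro s hs
        exact (hchain i ((t : ℕ) + s) (by omega)).1
      have htk : (t : ℕ) + k < len i := by omega
      have hlast : (⟨len i - 1, by have := hlen i; omega⟩ : Fin (len i)) = ⟨(t : ℕ) + k, htk⟩ := by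
        congr 1; omega
      have htraj := traj_chain f len idx g hchain U x0 i k t htk
      simp only [if_pos hkle]
      rw [hlast, htraj, show (⟨(t : ℕ), by omega⟩ : Fin (len i)) = t from Fin.eta t _,
        chainComp_invol (g i) t k hgs]
    funext j
    have h2 := key (e.symm j)
    have hj : idx (e.symm j).1 (e.symm j).2 = j := e.apply_symm_apply j
    rw [hj] at h2
    exact h2
  refine ⟨?_, F, hFmain⟩
  intro U x0 x0' hne
  by_contra hcon
  push_neg at hcon
  apply hne
  have hYeq : (fun i k => if k ≤ Finset.univ.sup len - 1 then
        traj f U x0 k (idx i ⟨len i - 1, by have := hlen i; omega⟩) else false)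
      = (fun i k => if k ≤ Finset.univ.sup len - 1 then
        traj f U x0' k (idx i ⟨len i - 1, by have := hlen i; omega⟩) else false) := by
    funext i k
    by_cases hk : k ≤ Finset.univ.sup len - 1
    · simp only [if_pos hk]
      exact hcon k hk i
    · simp [hk]
  have h1 := hFmain U x0
  rw [hYeq] at h1
  exact h1.symm.trans (hFmain U x0')
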